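/- Augmented-sequence summation bound: Let S ⊆ ℝ^n be nonempty closed convex, let x_1 ∈ ℝ^n, let K ≥ 2 be an integer, let δ_2, …, δ_K be arbitrary vectors in ℝ^n, and let τ_k, γ_k, η_k > 0 for 1 ≤ k ≤ K−1 satisfy τ_k/(γ_k η_k) ≤ τ_{k−1}/(γ_{k−1} η_{k−1}) for all 2 ≤ k ≤ K−1. Define the sequence x_k^a by x_1^a = x_2^a = x_1 and, for k ≥ 2, x_{k+1}^a := argmin_{x ∈ S} −⟨γ_{k−1} δ_k, x⟩ + (1/2)‖x − x_k^a‖². Then for every x ∈ S: Σ_{k=1}^{K−1} (τ_k/η_k)⟨δ_{k+1}, x − x_{k+1}^a⟩ ≤ (τ_1/(2γ_1 η_1))‖x − x_1‖² + Σ_{k=1}^{K−1} (γ_k τ_k/(2η_k))‖δ_{k+1}‖². -/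

import Mathlib

open RealInnerProductSpace

section Aux

variable {n : ℕ}

/-- Variational inequality from the quadratic minimization. -/
lemma aux_vi {S : Set (EuclideanSpace ℝ (Fin n))} (hconv : Convex ℝ S)
    (c a xp : EuclideanSpace ℝ (Fin n)) (hxp : xp ∈ S)
    (hmin : ∀ x ∈ S, -⟪c, xp⟫ + 1 / 2 * ‖xp - a‖ ^ 2 ≤ -⟪c, x⟫ + 1 / 2 * ‖x - a‖ ^ 2) :
    ∀ w ∈ S, ⟪c - (xp - a), w - xp⟫ ≤ 0 := by
  set u := a + c with hu
  have expand : ∀ y : EuclideanSpace ℝ (Fin n),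
      ‖u - y‖ ^ 2 = ‖y - a‖ ^ 2 - 2 * ⟪c, y⟫ + ‖c‖ ^ 2 + 2 * ⟪c, a⟫ := by
    intro y
    have h1 : u - y = (a - y) + c := by rw [hu]; abel
    have h2 : -(a - y) = y - a := by abel
    rw [h1, @norm_add_sq_real, norm_sub_rev a y, inner_sub_left,
      real_inner_comm c y, real_inner_comm c a]
    ring
  have key : ∀ w ∈ S, ‖u - xp‖ ≤ ‖u - w‖ := by
    intro w hw
    have h := hmin w hw
    have hsq : ‖u - xp‖ ^ 2 ≤ ‖u - w‖ ^ 2 := by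
      rw [expand xp, expand w]; linarith
    calc ‖u - xp‖ = Real.sqrt (‖u - xp‖ ^ 2) := (Real.sqrt_sq (norm_nonneg _)).symm
      _ ≤ Real.sqrt (‖u - w‖ ^ 2) := Real.sqrt_le_sqrt hsq
      _ = ‖u - w‖ := Real.sqrt_sq (norm_nonneg _)
  haveI : Nonempty S := ⟨⟨xp, hxp⟩⟩
  have hinf : ‖u - xp‖ = ⨅ w : S, ‖u - w‖ := by
    apply le_antisymm
    · exact le_ciInf fun w => key w w.2
    · exact ciInf_le ⟨0, fun _ ⟨_, h⟩ => h ▸ norm_nonneg _⟩ (⟨xp, hxp⟩ : S)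
  have hchar := (norm_eq_iInf_iff_real_inner_le_zero hconv hxp).mp hinf
  intro w hw
  have h2 := hchar w hw
  have heq : u - xp = c - (xp - a) := by rw [hu]; abel
  rwa [heq] at h2

end Aux

set_option maxHeartbeats 1000000 in
/-- **Augmented-sequence summation bound.** -/
theorem augmented_sequence_bound {n : ℕ} (S : Set (EuclideanSpace ℝ (Fin n)))
    (hne : S.Nonempty) (hcl : IsClosed S) (hconv : Convex ℝ S)
    (x1 : EuclideanSpace ℝ (Fin n)) (K : ℕ) (hK : 2 ≤ K)
    (δ : ℕ → EuclideanSpace ℝ (Fin n)) (τ γ η : ℕ → ℝ)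
    (hτ : ∀ k, 1 ≤ k → k ≤ K - 1 → 0 < τ k)
    (hγ : ∀ k, 1 ≤ k → k ≤ K - 1 → 0 < γ k)
    (hη : ∀ k, 1 ≤ k → k ≤ K - 1 → 0 < η k)
    (hdec : ∀ k, 2 ≤ k → k ≤ K - 1 →
      τ k / (γ k * η k) ≤ τ (k - 1) / (γ (k - 1) * η (k - 1)))
    (xa : ℕ → EuclideanSpace ℝ (Fin n))
    (hxa1 : xa 1 = x1) (hxa2 : xa 2 = x1)
    (hmem : ∀ k, 2 ≤ k → xa (k + 1) ∈ S)
    (hmin : ∀ k, 2 ≤ k → ∀ x ∈ S,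
      -⟪γ (k - 1) • δ k, xa (k + 1)⟫ + 1 / 2 * ‖xa (k + 1) - xa k‖ ^ 2
        ≤ -⟪γ (k - 1) • δ k, x⟫ + 1 / 2 * ‖x - xa k‖ ^ 2) :
    ∀ x ∈ S,
      ∑ k ∈ Finset.Icc 1 (K - 1), τ k / η k * ⟪δ (k + 1), x - xa (k + 1)⟫
        ≤ τ 1 / (2 * γ 1 * η 1) * ‖x - x1‖ ^ 2
          + ∑ k ∈ Finset.Icc 1 (K - 1), γ k * τ k / (2 * η k) * ‖δ (k + 1)‖ ^ 2 := by
  intro x hx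
  -- per-term inequality
  have hterm : ∀ k, 1 ≤ k → k ≤ K - 1 →
      τ k / η k * ⟪δ (k + 1), x - xa (k + 1)⟫
        + τ k / (2 * γ k * η k) * ‖x - xa (k + 2)‖ ^ 2
        ≤ τ k / (2 * γ k * η k) * ‖x - xa (k + 1)‖ ^ 2
          + γ k * τ k / (2 * η k) * ‖δ (k + 1)‖ ^ 2 := by
    intro k hk1 hkK
    have hγk := hγ k hk1 hkK
    have hτk := hτ k hk1 hkK
    have hηk := hη k hk1 hkK
    have hk2 : 2 ≤ k + 1 := by omega
    have hmin' := hmin (k + 1) hk2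
    simp only [Nat.add_sub_cancel] at hmin'
    have hvi := aux_vi hconv (γ k • δ (k + 1)) (xa (k + 1)) (xa (k + 1 + 1))
      (hmem (k + 1) hk2) hmin' x hx
    set e := δ (k + 1)
    set d := xa (k + 2) - xa (k + 1) with hd
    set u := x - xa (k + 2) with hu2
    set v := x - xa (k + 1) with hv
    have hvi' : γ k * ⟪e, u⟫ ≤ ⟪d, u⟫ := by
      rw [inner_sub_left, real_inner_smul_left] at hvi
      linarith [hvi]
    have hvud : v = u + d := by rw [hv, hu2, hd]; abel
    have hnorm : ‖v‖ ^ 2 = ‖u‖ ^ 2 + 2 * ⟪u, d⟫ + ‖d‖ ^ 2 := by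
      rw [hvud, @norm_add_sq_real]
    have hinner : ⟪e, v⟫ = ⟪e, u⟫ + ⟪e, d⟫ := by rw [hvud, inner_add_right]
    have hyoung : 2 * γ k * ⟪e, d⟫ ≤ γ k ^ 2 * ‖e‖ ^ 2 + ‖d‖ ^ 2 := by
      have h0 : (0:ℝ) ≤ ‖γ k • e - d‖ ^ 2 := sq_nonneg _
      rw [@norm_sub_sq_real, norm_smul, real_inner_smul_left] at h0
      simp only [Real.norm_eq_abs] at h0
      have habs : |γ k| = γ k := abs_of_pos hγk
      rw [habs] at h0
      nlinarith [h0]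
    have hud : ⟪u, d⟫ = ⟪d, u⟫ := real_inner_comm d u
    have hS : 2 * γ k * ⟪e, v⟫ + ‖u‖ ^ 2 ≤ ‖v‖ ^ 2 + γ k ^ 2 * ‖e‖ ^ 2 := by
      nlinarith [hvi', hyoung]
    have hpos : 0 < τ k / (2 * γ k * η k) := by positivity
    have h2 := mul_le_mul_of_nonneg_left hS hpos.le
    have e1 : τ k / (2 * γ k * η k) * (2 * γ k * ⟪e, v⟫ + ‖u‖ ^ 2)
        = τ k / η k * ⟪e, v⟫ + τ k / (2 * γ k * η k) * ‖u‖ ^ 2 := by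
      field_simp
    have e2 : τ k / (2 * γ k * η k) * (‖v‖ ^ 2 + γ k ^ 2 * ‖e‖ ^ 2)
        = τ k / (2 * γ k * η k) * ‖v‖ ^ 2 + γ k * τ k / (2 * η k) * ‖e‖ ^ 2 := by
      field_simp
    rw [e1, e2] at h2
    exact h2
  -- induction claim
  have claim : ∀ m, 1 ≤ m → m ≤ K - 1 →
      ∑ k ∈ Finset.Icc 1 m, τ k / η k * ⟪δ (k + 1), x - xa (k + 1)⟫
          + τ m / (2 * γ m * η m) * ‖x - xa (m + 2)‖ ^ 2
        ≤ τ 1 / (2 * γ 1 * η 1) * ‖x - x1‖ ^ 2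
          + ∑ k ∈ Finset.Icc 1 m, γ k * τ k / (2 * η k) * ‖δ (k + 1)‖ ^ 2 := by
    intro m hm
    induction m, hm using Nat.le_induction with
    | base =>
      intro h1K
      simp only [Finset.Icc_self, Finset.sum_singleton]
      have h := hterm 1 le_rfl h1K
      rw [show (1:ℕ) + 1 = 2 from rfl, hxa2] at h
      rw [show (1:ℕ) + 1 = 2 from rfl, hxa2]
      exact h
    | succ m hm ih =>
      intro hmK
      have hmK' : m ≤ K - 1 := by omega
      have ih' := ih hmK'
      rw [Finset.sum_Icc_succ_top (by omega : 1 ≤ m + 1),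
        Finset.sum_Icc_succ_top (by omega : 1 ≤ m + 1)]
      have ht := hterm (m + 1) (by omega) hmK
      -- coefficient monotonicity
      have hd := hdec (m + 1) (by omega) hmK
      simp only [Nat.add_sub_cancel] at hd
      have hdec' : τ (m + 1) / (2 * γ (m + 1) * η (m + 1)) ≤ τ m / (2 * γ m * η m) := by
        have e1 : τ (m + 1) / (2 * γ (m + 1) * η (m + 1))
            = τ (m + 1) / (γ (m + 1) * η (m + 1)) / 2 := by ring
        have e2 : τ m / (2 * γ m * η m) = τ m / (γ m * η m) / 2 := by ring
        rw [e1, e2]; linarith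
      have hnn : (0:ℝ) ≤ ‖x - xa (m + 1 + 1)‖ ^ 2 := sq_nonneg _
      have hmono : τ (m + 1) / (2 * γ (m + 1) * η (m + 1)) * ‖x - xa (m + 1 + 1)‖ ^ 2
          ≤ τ m / (2 * γ m * η m) * ‖x - xa (m + 1 + 1)‖ ^ 2 :=
        mul_le_mul_of_nonneg_right hdec' hnn
      have e3 : m + 1 + 1 = m + 2 := by ring
      rw [e3] at hmono
      have e4 : m + 1 + 2 = m + 3 := by ring
      rw [e4] at ht ⊢
      linarith [ht, ih', hmono]
  -- conclude
  have hfin := claim (K - 1) (by omega) le_rfl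
  have hτK := hτ (K - 1) (by omega) le_rfl
  have hγK := hγ (K - 1) (by omega) le_rfl
  have hηK := hη (K - 1) (by omega) le_rfl
  have hnn : (0:ℝ) ≤ τ (K - 1) / (2 * γ (K - 1) * η (K - 1)) * ‖x - xa (K - 1 + 2)‖ ^ 2 := by
    positivity
  linarith [hfin, hnn]
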